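/- Define the modified binary entropy h̃ : ℝ → ℝ by h̃(q) = −q·log₂ q − (1−q)·log₂(1−q) for q ∈ [0, 1/2] (with h̃(0) = 0 by convention) and h̃(q) = 1 for q ∉ [0, 1/2], and define the asymptotic key rate R(w) = 1 − h̃[ (2√2 + 4 − 8w) / (√2 − 1) ] for w ∈ (3/4, (2+√2)/4]. Then R(w) > 0 if and only if w > (9 + 3√2)/16; moreover R((2+√2)/4) = 1. -/
import Mathlib

lemma htilde_eq_binEntropy (q : ℝ) :
    -q * Real.logb 2 q - (1 - q) * Real.logb 2 (1 - q) = Real.binEntropy q / Real.log 2 := by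
  rw [Real.binEntropy, Real.log_inv, Real.log_inv, Real.logb, Real.logb]
  ring

lemma htilde_lt_one (htilde : ℝ → ℝ)
    (hh1 : ∀ q ∈ Set.Icc (0 : ℝ) (1 / 2),
      htilde q = -q * Real.logb 2 q - (1 - q) * Real.logb 2 (1 - q))
    (hh2 : ∀ q, q ∉ Set.Icc (0 : ℝ) (1 / 2) → htilde q = 1)
    (q : ℝ) (hq0 : 0 ≤ q) : htilde q < 1 ↔ q < 1 / 2 := by
  rcases le_or_gt q (1 / 2) with hq | hq
  · rw [hh1 q ⟨hq0, hq⟩, htilde_eq_binEntropy,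
      div_lt_one (Real.log_pos (by norm_num)), Real.binEntropy_lt_log_two]
    constructor
    · intro h; rcases lt_or_eq_of_le hq with h' | h'
      · exact h'
      · exact absurd (by rw [h']; norm_num) h
    · intro h; intro h'; rw [h'] at h; norm_num at h
  · rw [hh2 q (by simp [Set.mem_Icc]; intro _; linarith)]
    simp; linarith

/-- The asymptotic key rate `R(w) = 1 - h̃[(2√2 + 4 - 8w)/(√2 - 1)]`
satisfies `R(w) > 0 ↔ w > (9 + 3√2)/16` for `w ∈ (3/4, (2+√2)/4]`, and
`R((2+√2)/4) = 1`. -/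
theorem stmt_16 (htilde : ℝ → ℝ)
    (hh1 : ∀ q ∈ Set.Icc (0 : ℝ) (1 / 2),
      htilde q = -q * Real.logb 2 q - (1 - q) * Real.logb 2 (1 - q))
    (hh2 : ∀ q, q ∉ Set.Icc (0 : ℝ) (1 / 2) → htilde q = 1)
    (R : ℝ → ℝ)
    (hR : ∀ w ∈ Set.Ioc (3 / 4 : ℝ) ((2 + Real.sqrt 2) / 4),
      R w = 1 - htilde ((2 * Real.sqrt 2 + 4 - 8 * w) / (Real.sqrt 2 - 1))) :
    (∀ w ∈ Set.Ioc (3 / 4 : ℝ) ((2 + Real.sqrt 2) / 4),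
      (0 < R w ↔ (9 + 3 * Real.sqrt 2) / 16 < w)) ∧
    R ((2 + Real.sqrt 2) / 4) = 1 := by
  have hs2 : Real.sqrt 2 ^ 2 = 2 := Real.sq_sqrt (by norm_num)
  have hs1 : (1 : ℝ) < Real.sqrt 2 := by nlinarith [Real.sqrt_nonneg 2]
  have hmem : (2 + Real.sqrt 2) / 4 ∈ Set.Ioc (3 / 4 : ℝ) ((2 + Real.sqrt 2) / 4) :=
    ⟨by linarith, le_refl _⟩
  constructor
  · intro w hw
    obtain ⟨hw1, hw2⟩ := hw
    rw [hR w ⟨hw1, hw2⟩]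
    set q := (2 * Real.sqrt 2 + 4 - 8 * w) / (Real.sqrt 2 - 1) with hqdef
    have hq0 : 0 ≤ q := div_nonneg (by linarith) (by linarith)
    have hiff : q < 1 / 2 ↔ (9 + 3 * Real.sqrt 2) / 16 < w := by
      rw [hqdef, div_lt_iff₀ (by linarith)]
      constructor <;> intro h <;> nlinarith
    rw [sub_pos, htilde_lt_one htilde hh1 hh2 q hq0]
    exact hiff
  · rw [hR _ hmem]
    have hq : (2 * Real.sqrt 2 + 4 - 8 * ((2 + Real.sqrt 2) / 4)) / (Real.sqrt 2 - 1) = 0 := by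
      rw [div_eq_zero_iff]; left; ring
    rw [hq, hh1 0 (by norm_num)]
    norm_num
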